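/- Over an algebraically closed field F of characteristic not 2, every pair (A,B) of skew-symmetric n×n matrices with A invertible is congruent to a direct sum of pairs of the form J_m(λ)-pair = ( [[0,I_m],[-I_m,0]], [[0,J_m(λ)],[-J_m(λ)ᵀ,0]] ) with λ ∈ F. -/

import Mathlib

open Matrix

/-- The `m × m` lower Jordan block with `lam` on the diagonal and `1` on the subdiagonal. -/
def jordanBlock {F : Type*} [Field F] (m : ℕ) (lam : F) : Matrix (Fin m) (Fin m) F :=
  Matrix.of fun i j => if i = j then lam else if (i : ℕ) = (j : ℕ) + 1 then 1 else 0

/-- `(P, Q)` is (a copy of) the pair `𝒥_m(λ) = ([[0,I],[-I,0]], [[0,J_m(λ)],[-J_m(λ)ᵀ,0]])`. -/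
def IsJPair {F : Type*} [Field F] {d : ℕ} (P Q : Matrix (Fin d) (Fin d) F) : Prop :=
  ∃ (m : ℕ) (lam : F) (e : Fin m ⊕ Fin m ≃ Fin d),
    P = Matrix.reindex e e (fromBlocks 0 1 (-1) 0) ∧
    Q = Matrix.reindex e e (fromBlocks 0 (jordanBlock m lam) (-(jordanBlock m lam)ᵀ) 0)


namespace JPairProof
variable {F : Type*} [Field F]

/-- The bilinear form associated to `A`. -/
def sf {n : ℕ} (A : Matrix (Fin n) (Fin n) F) (u v : Fin n → F) : F := u ⬝ᵥ A *ᵥ v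

variable {n : ℕ} {A X : Matrix (Fin n) (Fin n) F}

lemma sf_skew (hA : Aᵀ = -A) (u v : Fin n → F) : sf A u v = - sf A v u := by
  have h1 : sf A u v = (Aᵀ *ᵥ u) ⬝ᵥ v := by
    rw [sf, dotProduct_mulVec, mulVec_transpose]
  rw [h1, hA, dotProduct_comm, neg_mulVec, dotProduct_neg, sf]

lemma sf_adj (h : Xᵀ * A = A * X) (u v : Fin n → F) :
    sf A (X *ᵥ u) v = sf A u (X *ᵥ v) := by
  rw [sf, sf, dotProduct_mulVec (X *ᵥ u), vecMul_mulVec, h, mulVec_mulVec,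
    dotProduct_mulVec u]

lemma sf_sum_right {ι : Type*} (s : Finset ι) (u : Fin n → F) (f : ι → Fin n → F) :
    sf A u (∑ i ∈ s, f i) = ∑ i ∈ s, sf A u (f i) := by
  simp only [sf]
  rw [show A *ᵥ (∑ i ∈ s, f i) = ∑ i ∈ s, A *ᵥ f i from map_sum (Matrix.mulVecLin A) f s]
  simp only [dotProduct, Finset.sum_apply, Finset.mul_sum]
  exact Finset.sum_comm

lemma sf_sum_left {ι : Type*} (s : Finset ι) (u : Fin n → F) (f : ι → Fin n → F) :
    sf A (∑ i ∈ s, f i) u = ∑ i ∈ s, sf A (f i) u := by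
  simp only [sf, dotProduct, Finset.sum_apply, Finset.sum_mul]
  exact Finset.sum_comm

lemma sf_smul_right (c : F) (u v : Fin n → F) : sf A u (c • v) = c * sf A u v := by
  simp only [sf, mulVec_smul, dotProduct_smul, smul_eq_mul]

lemma sf_smul_left (c : F) (u v : Fin n → F) : sf A (c • u) v = c * sf A u v := by
  simp only [sf, smul_dotProduct, smul_eq_mul]

lemma sf_add_right (u v w : Fin n → F) : sf A u (v + w) = sf A u v + sf A u w := by
  simp only [sf, mulVec_add, dotProduct_add]

lemma sf_add_left (u v w : Fin n → F) : sf A (u + v) w = sf A u w + sf A v w := by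
  simp only [sf, add_dotProduct]

lemma sf_zero_left (w : Fin n → F) : sf A 0 w = 0 := by simp [sf]

lemma sf_zero_right (w : Fin n → F) : sf A w 0 = 0 := by simp [sf]

lemma sf_single_left (i : Fin n) (v : Fin n → F) : sf A (Pi.single i 1) v = (A *ᵥ v) i := by
  simp [sf, single_dotProduct]

end JPairProof

namespace JPairProof
variable {F : Type*} [Field F]

noncomputable def normCoef (c : ℕ → F) (m : ℕ) : ℕ → F
  | 0 => (c (m - 1))⁻¹
  | j + 1 => -(c (m - 1))⁻¹ * ∑ i : Fin (j + 1), normCoef c m i * c (m - 1 - (j + 1) + i)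
termination_by j => j
decreasing_by exact i.isLt

lemma normCoef_spec (c : ℕ → F) (m : ℕ) (hc : c (m - 1) ≠ 0)
    (hhi : ∀ t, m ≤ t → c t = 0) (k : ℕ) (hk : k < m) :
    ∑ j ∈ Finset.range m, normCoef c m j * c (k + j) = if k = m - 1 then 1 else 0 := by
  have h1 : ∑ j ∈ Finset.range m, normCoef c m j * c (k + j)
      = ∑ j ∈ Finset.range (m - 1 - k + 1), normCoef c m j * c (k + j) := by
    refine (Finset.sum_subset ?_ ?_).symm
    · intro j hj; simp only [Finset.mem_range] at hj ⊢; omega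
    · intro j hj hnj; simp only [Finset.mem_range] at hj hnj
      rw [hhi (k + j) (by omega), mul_zero]
  rw [h1, Finset.sum_range_succ, show k + (m - 1 - k) = m - 1 from by omega]
  rcases Nat.eq_zero_or_pos (m - 1 - k) with h0 | hpos
  · rw [h0]
    have hk1 : k = m - 1 := by omega
    simp only [Finset.range_zero, Finset.sum_empty, zero_add, if_pos hk1]
    rw [normCoef]
    exact inv_mul_cancel₀ hc
  · obtain ⟨j, hj⟩ : ∃ j, m - 1 - k = j + 1 := ⟨m - 1 - k - 1, by omega⟩
    rw [hj]
    have hkj : k = m - 1 - (j + 1) := by omega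
    have hrec : normCoef c m (j + 1)
        = -(c (m - 1))⁻¹ * ∑ i : Fin (j + 1), normCoef c m i * c (m - 1 - (j + 1) + i) := by
      rw [normCoef]
    have hsum : ∑ i ∈ Finset.range (j + 1), normCoef c m i * c (k + i)
        = ∑ i : Fin (j + 1), normCoef c m i * c (m - 1 - (j + 1) + i) := by
      rw [Finset.sum_range fun i => normCoef c m i * c (k + i)]
      congr 1; funext i; rw [← hkj]
    rw [hsum, hrec, if_neg (by omega)]
    field_simp
    ring

variable {n : ℕ} {A N : Matrix (Fin n) (Fin n) F}

lemma pow_adj (h : Nᵀ * A = A * N) (k : ℕ) : (N ^ k)ᵀ * A = A * N ^ k := by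
  induction k with
  | zero => simp
  | succ k ih =>
    rw [pow_succ, transpose_mul, mul_assoc, ih, ← mul_assoc, h, mul_assoc, ← pow_succ,
      ← pow_succ']

lemma sf_pow_adj (h : Nᵀ * A = A * N) (k : ℕ) (u v : Fin n → F) :
    sf A (N ^ k *ᵥ u) v = sf A u (N ^ k *ᵥ v) :=
  sf_adj (pow_adj h k) u v

lemma sf_pow_pow (h : Nᵀ * A = A * N) (a b : ℕ) (u v : Fin n → F) :
    sf A (N ^ a *ᵥ u) (N ^ b *ᵥ v) = sf A u (N ^ (a + b) *ᵥ v) := by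
  rw [sf_pow_adj h, mulVec_mulVec, ← pow_add]

lemma sf_self_pow (hchar : (2 : F) ≠ 0) (hA : Aᵀ = -A) (h : Nᵀ * A = A * N) (k : ℕ)
    (w : Fin n → F) : sf A w (N ^ k *ᵥ w) = 0 := by
  have h1 : sf A w (N ^ k *ᵥ w) = - sf A w (N ^ k *ᵥ w) := by
    conv_lhs => rw [← sf_pow_adj h, sf_skew hA]
  have h2 : (2 : F) * sf A w (N ^ k *ᵥ w) = 0 := by ring_nf; linear_combination h1
  rcases mul_eq_zero.mp h2 with h | h
  · exact absurd h hchar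
  · exact h

end JPairProof

namespace JPairProof
variable {F : Type*} [Field F]

lemma mul_mul_transpose_entry {n k : ℕ} (S : Matrix (Fin k) (Fin n) F)
    (A : Matrix (Fin n) (Fin n) F) (l r : Fin k) :
    (S * A * Sᵀ) l r = sf A (S l) (S r) := by
  simp only [sf, Matrix.mul_apply, Matrix.transpose_apply, dotProduct, Matrix.mulVec,
    Finset.sum_mul, Finset.mul_sum]
  rw [Finset.sum_comm]
  refine Finset.sum_congr rfl fun p _ => Finset.sum_congr rfl fun q _ => by ring

lemma G0_mul_G0 {m : ℕ} :
    (fromBlocks (0 : Matrix (Fin m) (Fin m) F) 1 (-1) 0) *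
      (fromBlocks (0 : Matrix (Fin m) (Fin m) F) 1 (-1) 0) = (-1 : Matrix (Fin m ⊕ Fin m) (Fin m ⊕ Fin m) F) := by
  rw [Matrix.fromBlocks_multiply]
  simp [← Matrix.fromBlocks_one, Matrix.fromBlocks_neg]


set_option maxHeartbeats 3200000 in
theorem VG [IsAlgClosed F] (hchar : (2 : F) ≠ 0) :
    ∀ n : ℕ, ∀ A B : Matrix (Fin n) (Fin n) F, Aᵀ = -A → Bᵀ = -B → IsUnit A →
    ∃ (ι : Type) (_ : Fintype ι) (sz : ι → ℕ)
      (P Q : ∀ i : ι, Matrix (Fin (sz i)) (Fin (sz i)) F),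
      (∀ i, IsJPair (P i) (Q i)) ∧
      Nonempty ((Σ i : ι, Fin (sz i)) ≃ Fin n) ∧
      ∃ v : (Σ i : ι, Fin (sz i)) → (Fin n → F),
        (∀ (i : ι) (a b : Fin (sz i)), sf A (v ⟨i, a⟩) (v ⟨i, b⟩) = P i a b) ∧
        (∀ (i j : ι) (a : Fin (sz i)) (b : Fin (sz j)), i ≠ j → sf A (v ⟨i, a⟩) (v ⟨j, b⟩) = 0) ∧
        (∀ (i : ι) (a b : Fin (sz i)), sf B (v ⟨i, a⟩) (v ⟨i, b⟩) = Q i a b) ∧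
        (∀ (i j : ι) (a : Fin (sz i)) (b : Fin (sz j)), i ≠ j → sf B (v ⟨i, a⟩) (v ⟨j, b⟩) = 0) := by
  classical
  intro n
  induction n using Nat.strong_induction_on with
  | _ n IH =>
  intro A B hA hB hinv
  rcases Nat.eq_zero_or_pos n with hn0 | hnpos
  · subst hn0
    exact ⟨Empty, inferInstance, fun i => i.elim, fun i => i.elim, fun i => i.elim,
      fun i => i.elim, ⟨Equiv.equivOfIsEmpty _ _⟩, fun s => s.1.elim,
      fun i => i.elim, fun i => i.elim, fun i => i.elim, fun i => i.elim⟩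
  -- Set up the inverse and the self-adjoint operator X = A⁻¹ B
  obtain ⟨U, hU⟩ := hinv
  set C : Matrix (Fin n) (Fin n) F := ↑U⁻¹ with hC
  have hCA : C * A = 1 := by rw [hC, ← hU]; exact U.inv_mul
  have hAC : A * C = 1 := by rw [hC, ← hU]; exact U.mul_inv
  set X := C * B with hX
  have hAX : A * X = B := by rw [hX, ← mul_assoc, hAC, one_mul]
  have hCtA : Cᵀ * A = -1 := by
    have h1 : Cᵀ * Aᵀ = 1 := by rw [← Matrix.transpose_mul, hAC, Matrix.transpose_one]
    have hA' : A = -Aᵀ := by rw [hA, neg_neg]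
    rw [hA', Matrix.mul_neg, h1]
  have hXadj : Xᵀ * A = A * X := by
    rw [hX, Matrix.transpose_mul, mul_assoc, hCtA, hAX, Matrix.mul_neg, mul_one, hB, neg_neg]
  have hCancel : ∀ w : Fin n → F, A *ᵥ w = 0 → w = 0 := by
    intro w hw
    have h2 : C *ᵥ (A *ᵥ w) = (C * A) *ᵥ w := mulVec_mulVec w C A
    rw [hw, mulVec_zero, hCA, one_mulVec] at h2
    exact h2.symm
  -- eigenvalue
  haveI : Nonempty (Fin n) := ⟨⟨0, hnpos⟩⟩
  obtain ⟨lam, hlam⟩ := Module.End.exists_eigenvalue (Matrix.mulVecLin X)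
  obtain ⟨v₀, hv₀⟩ := hlam.exists_hasEigenvector
  have hv₀ne : v₀ ≠ 0 := hv₀.right
  have hXv₀ : X *ᵥ v₀ = lam • v₀ := by
    have := hv₀.apply_eq_smul
    simpa [Matrix.mulVecLin_apply] using this
  set N := X - lam • (1 : Matrix (Fin n) (Fin n) F) with hN
  have hNadj : Nᵀ * A = A * N := by
    rw [hN, Matrix.transpose_sub, Matrix.sub_mul, Matrix.mul_sub, hXadj, Matrix.transpose_smul,
      Matrix.transpose_one, Matrix.smul_mul, Matrix.mul_smul, Matrix.one_mul, Matrix.mul_one]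
  have hXw : ∀ w : Fin n → F, X *ᵥ w = N *ᵥ w + lam • w := by
    intro w
    rw [hN, Matrix.sub_mulVec, Matrix.smul_mulVec, Matrix.one_mulVec, sub_add_cancel]
  have hNv₀ : N *ᵥ v₀ = 0 := by
    rw [hN, Matrix.sub_mulVec, hXv₀, Matrix.smul_mulVec, Matrix.one_mulVec, sub_self]
  -- nilpotency index m on the generalized eigenspace
  have hexm : ∃ k : ℕ, ∀ w : Fin n → F, N ^ n *ᵥ w = 0 → N ^ k *ᵥ w = 0 := ⟨n, fun w h => h⟩
  set m := Nat.find hexm with hm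
  have hmspec : ∀ w, N ^ n *ᵥ w = 0 → N ^ m *ᵥ w = 0 := Nat.find_spec hexm
  have hv₀pow : ∀ k, 1 ≤ k → N ^ k *ᵥ v₀ = 0 := by
    intro k hk
    obtain ⟨j, rfl⟩ : ∃ j, k = j + 1 := ⟨k - 1, by omega⟩
    rw [pow_succ, ← mulVec_mulVec, hNv₀, mulVec_zero]
  have hmpos : 0 < m := by
    rcases Nat.eq_zero_or_pos m with h0 | h
    · exfalso
      have h2 := hmspec v₀ (hv₀pow n hnpos)
      rw [h0, pow_zero, one_mulVec] at h2
      exact hv₀ne h2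
    · exact h
  obtain ⟨y, hyK, hyz⟩ : ∃ y, N ^ n *ᵥ y = 0 ∧ N ^ (m - 1) *ᵥ y ≠ 0 := by
    have h3 := Nat.find_min hexm (show m - 1 < m by omega)
    push_neg at h3
    exact h3
  set z := N ^ (m - 1) *ᵥ y with hz
  have hNmy : N ^ m *ᵥ y = 0 := hmspec y hyK
  have hykill : ∀ k, m ≤ k → N ^ k *ᵥ y = 0 := by
    intro k hk
    obtain ⟨j, rfl⟩ : ∃ j, k = j + m := ⟨k - m, by omega⟩
    rw [pow_add, ← mulVec_mulVec, hNmy, mulVec_zero]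
  -- a vector pairing nontrivially with z
  have hAz : A *ᵥ z ≠ 0 := fun hcon => hyz (hCancel z hcon)
  obtain ⟨i0, hi0⟩ : ∃ i, (A *ᵥ z) i ≠ 0 := by
    by_contra hcon
    push_neg at hcon
    exact hAz (funext hcon)
  -- Fitting-type decomposition to correct x₀ into the generalized eigenspace
  have hzkill : N ^ n *ᵥ z = 0 := by
    rw [hz, mulVec_mulVec, ← pow_add]
    exact hykill (n + (m - 1)) (by omega)
  have hxex : ∃ x : Fin n → F, N ^ n *ᵥ x = 0 ∧ sf A x z ≠ 0 := by
    have hpow : ∀ k : ℕ, Matrix.mulVecLin (N ^ k) = (Matrix.mulVecLin N) ^ k := by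
      intro k
      induction k with
      | zero => simp [Matrix.mulVecLin_one, Module.End.one_eq_id]
      | succ k ih => rw [pow_succ, pow_succ, Matrix.mulVecLin_mul, ih, Module.End.mul_eq_comp]
    set f := Matrix.mulVecLin N with hf
    have hfr : Module.finrank F (Fin n → F) = n := by
      simp [Module.finrank_fintype_fun_eq_card]
    have hker2 : LinearMap.ker (f ^ (n + n)) = LinearMap.ker (f ^ n) := by
      have h1 := Module.End.ker_pow_eq_ker_pow_finrank_of_le (K := F) (V := Fin n → F)
        (f := f) (m := n + n) (by omega)
      have h2 := Module.End.ker_pow_eq_ker_pow_finrank_of_le (K := F) (V := Fin n → F)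
        (f := f) (m := n) (by omega)
      rw [h1, h2]
    have hdisj2 : LinearMap.ker (f ^ n) ⊓ LinearMap.range (f ^ n) = ⊥ := by
      rw [Submodule.eq_bot_iff]
      rintro w ⟨hwk, u, rfl⟩
      have hu : u ∈ LinearMap.ker (f ^ (n + n)) := by
        rw [LinearMap.mem_ker, pow_add, Module.End.mul_apply]
        exact hwk
      rw [hker2, LinearMap.mem_ker] at hu
      exact hu
    have hsup2 : LinearMap.ker (f ^ n) ⊔ LinearMap.range (f ^ n) = ⊤ := by
      apply Submodule.eq_top_of_finrank_eq
      have h3 := Submodule.finrank_sup_add_finrank_inf_eq (LinearMap.ker (f ^ n))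
        (LinearMap.range (f ^ n))
      rw [hdisj2, finrank_bot, add_zero] at h3
      have h4 := LinearMap.finrank_range_add_finrank_ker (f ^ n)
      rw [hfr] at h4
      rw [hfr]
      omega
    have hx₀mem : (Pi.single i0 1 : Fin n → F) ∈
        LinearMap.ker (f ^ n) ⊔ LinearMap.range (f ^ n) := hsup2 ▸ Submodule.mem_top
    obtain ⟨xk, hxk, xr, hxr, hsum⟩ := Submodule.mem_sup.mp hx₀mem
    obtain ⟨u, rfl⟩ := hxr
    have hfnu : ∀ w : Fin n → F, (f ^ n) w = N ^ n *ᵥ w := by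
      intro w
      rw [← hpow n]
      rfl
    refine ⟨xk, ?_, ?_⟩
    · rw [LinearMap.mem_ker, hfnu] at hxk
      exact hxk
    · have hfu : sf A ((f ^ n) u) z = 0 := by
        rw [hfnu, sf_pow_adj hNadj, hzkill, sf_zero_right]
      intro hcon
      apply hi0
      have h5 : sf A (Pi.single i0 1) z = 0 := by
        rw [← hsum, sf_add_left, hcon, hfu, add_zero]
      rw [sf_single_left] at h5
      exact h5
  obtain ⟨x, hxK, hxz⟩ := hxex
  have hNmx : N ^ m *ᵥ x = 0 := hmspec x hxK
  have hxkill : ∀ k, m ≤ k → N ^ k *ᵥ x = 0 := by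
    intro k hk
    obtain ⟨j, rfl⟩ : ∃ j, k = j + m := ⟨k - m, by omega⟩
    rw [pow_add, ← mulVec_mulVec, hNmx, mulVec_zero]
  -- normalization of the pairing sequence
  set c : ℕ → F := fun k => sf A x (N ^ k *ᵥ y) with hcdef
  have hcm1 : c (m - 1) ≠ 0 := hxz
  have hchi : ∀ t, m ≤ t → c t = 0 := by
    intro t ht
    rw [hcdef]
    simp only []
    rw [hykill t ht]
    simp [sf]
  set y' : Fin n → F := ∑ j ∈ Finset.range m, normCoef c m j • (N ^ j *ᵥ y) with hy'
  have hy'kill : ∀ k, m ≤ k → N ^ k *ᵥ y' = 0 := by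
    intro k hk
    rw [hy', show (N ^ k) *ᵥ (∑ j ∈ Finset.range m, normCoef c m j • (N ^ j *ᵥ y))
        = ∑ j ∈ Finset.range m, normCoef c m j • (N ^ k *ᵥ (N ^ j *ᵥ y)) from by
      rw [show ∀ v, N ^ k *ᵥ v = Matrix.mulVecLin (N ^ k) v from fun v => rfl]
      rw [map_sum]
      exact Finset.sum_congr rfl fun j _ => _root_.map_smul _ _ _]
    refine Finset.sum_eq_zero fun j hj => ?_
    rw [mulVec_mulVec, ← pow_add, hykill (k + j) (by omega), smul_zero]
  have hcy' : ∀ k, sf A x (N ^ k *ᵥ y') = if k = m - 1 then 1 else 0 := by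
    intro k
    rcases le_or_gt m k with hk | hk
    · rw [hy'kill k hk, sf_zero_right, if_neg (by omega)]
    · have hexp : N ^ k *ᵥ y' = ∑ j ∈ Finset.range m, normCoef c m j • (N ^ (k + j) *ᵥ y) := by
        rw [hy']
        rw [show (N ^ k) *ᵥ (∑ j ∈ Finset.range m, normCoef c m j • (N ^ j *ᵥ y))
            = Matrix.mulVecLin (N ^ k) (∑ j ∈ Finset.range m, normCoef c m j • (N ^ j *ᵥ y))
            from rfl, map_sum]
        refine Finset.sum_congr rfl fun j hj => ?_
        rw [_root_.map_smul]
        congr 1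
        show N ^ k *ᵥ (N ^ j *ᵥ y) = N ^ (k + j) *ᵥ y
        rw [mulVec_mulVec, ← pow_add]
      rw [hexp, sf_sum_right,
        Finset.sum_congr rfl (fun j _ => by rw [sf_smul_right] :
          ∀ j ∈ Finset.range m, sf A x (normCoef c m j • (N ^ (k + j) *ᵥ y))
            = normCoef c m j * c (k + j))]
      exact normCoef_spec c m hcm1 hchi k hk
  -- self-orthogonality facts
  have hxy'val : ∀ a b : ℕ, sf A (N ^ a *ᵥ x) (N ^ b *ᵥ y')
      = if a + b = m - 1 then 1 else 0 := by
    intro a b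
    rw [sf_pow_pow hNadj, hcy']
  have hxxval : ∀ a b : ℕ, sf A (N ^ a *ᵥ x) (N ^ b *ᵥ x) = 0 := by
    intro a b
    rw [sf_pow_pow hNadj, sf_self_pow hchar hA hNadj]
  have hyyval : ∀ a b : ℕ, sf A (N ^ a *ᵥ y') (N ^ b *ᵥ y') = 0 := by
    intro a b
    rw [sf_pow_pow hNadj, sf_self_pow hchar hA hNadj]
  have hy'xval : ∀ a b : ℕ, sf A (N ^ a *ᵥ y') (N ^ b *ᵥ x)
      = -(if b + a = m - 1 then 1 else 0) := by
    intro a b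
    rw [sf_skew hA, hxy'val]
  -- the canonical 2m-dimensional block
  set E : Fin m ⊕ Fin m → (Fin n → F) :=
    Sum.elim (fun i => N ^ (m - 1 - (i : ℕ)) *ᵥ x) (fun j => N ^ (j : ℕ) *ᵥ y') with hE
  set G₀ : Matrix (Fin m ⊕ Fin m) (Fin m ⊕ Fin m) F := fromBlocks 0 1 (-1) 0 with hG₀
  set Jm := jordanBlock m lam with hJm
  set GB : Matrix (Fin m ⊕ Fin m) (Fin m ⊕ Fin m) F := fromBlocks 0 Jm (-Jmᵀ) 0 with hGB
  have hGA : ∀ s t, sf A (E s) (E t) = G₀ s t := by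
    rintro (i | i) (j | j)
    · show sf A (N ^ (m - 1 - (i : ℕ)) *ᵥ x) (N ^ (m - 1 - (j : ℕ)) *ᵥ x) = G₀ (Sum.inl i) (Sum.inl j)
      rw [hxxval, hG₀, Matrix.fromBlocks_apply₁₁, Matrix.zero_apply]
    · show sf A (N ^ (m - 1 - (i : ℕ)) *ᵥ x) (N ^ (j : ℕ) *ᵥ y') = G₀ (Sum.inl i) (Sum.inr j)
      rw [hxy'val, hG₀, Matrix.fromBlocks_apply₁₂, Matrix.one_apply]
      have hi := i.isLt; have hj := j.isLt
      by_cases h : i = j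
      · subst h; rw [if_pos (by omega), if_pos rfl]
      · rw [if_neg (fun hcon => h (Fin.ext (by omega))), if_neg h]
    · show sf A (N ^ (i : ℕ) *ᵥ y') (N ^ (m - 1 - (j : ℕ)) *ᵥ x) = G₀ (Sum.inr i) (Sum.inl j)
      rw [hy'xval, hG₀, Matrix.fromBlocks_apply₂₁, Matrix.neg_apply, Matrix.one_apply]
      have hi := i.isLt; have hj := j.isLt
      by_cases h : i = j
      · subst h; rw [if_pos (by omega), if_pos rfl]
      · rw [if_neg (fun hcon => h (Fin.ext (by omega))), if_neg h]
    · show sf A (N ^ (i : ℕ) *ᵥ y') (N ^ (j : ℕ) *ᵥ y') = G₀ (Sum.inr i) (Sum.inr j)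
      rw [hyyval, hG₀, Matrix.fromBlocks_apply₂₂, Matrix.zero_apply]
  have hsfB : ∀ u w : Fin n → F, sf B u w = sf A u (X *ᵥ w) := by
    intro u w
    simp only [sf]
    rw [← hAX, ← mulVec_mulVec]
  have hXNpow : ∀ (w : Fin n → F) (b : ℕ),
      X *ᵥ (N ^ b *ᵥ w) = N ^ (b + 1) *ᵥ w + lam • (N ^ b *ᵥ w) := by
    intro w b
    rw [hXw]
    congr 1
    rw [mulVec_mulVec, ← pow_succ']
  have hGBE : ∀ s t, sf B (E s) (E t) = GB s t := by
    rintro (i | i) (j | j) <;>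
      [show sf B (N ^ (m - 1 - (i : ℕ)) *ᵥ x) (N ^ (m - 1 - (j : ℕ)) *ᵥ x)
        = GB (Sum.inl i) (Sum.inl j);
       show sf B (N ^ (m - 1 - (i : ℕ)) *ᵥ x) (N ^ (j : ℕ) *ᵥ y') = GB (Sum.inl i) (Sum.inr j);
       show sf B (N ^ (i : ℕ) *ᵥ y') (N ^ (m - 1 - (j : ℕ)) *ᵥ x) = GB (Sum.inr i) (Sum.inl j);
       show sf B (N ^ (i : ℕ) *ᵥ y') (N ^ (j : ℕ) *ᵥ y') = GB (Sum.inr i) (Sum.inr j)]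
    · rw [hsfB, hXNpow, sf_add_right, sf_smul_right, hxxval, hxxval, hGB,
        Matrix.fromBlocks_apply₁₁, Matrix.zero_apply]
      ring
    · rw [hsfB, hXNpow, sf_add_right, sf_smul_right, hxy'val, hxy'val, hGB,
        Matrix.fromBlocks_apply₁₂, hJm]
      have hi := i.isLt; have hj := j.isLt
      show _ = if i = j then lam else if (i : ℕ) = (j : ℕ) + 1 then 1 else 0
      by_cases h1 : i = j
      · subst h1
        rw [if_neg (by omega), if_pos (by omega), if_pos rfl]
        ring
      · have h1' : (i : ℕ) ≠ (j : ℕ) := fun hcon => h1 (Fin.ext hcon)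
        rw [if_neg h1]
        by_cases h2 : (i : ℕ) = (j : ℕ) + 1
        · rw [if_pos (by omega), if_neg (by omega), if_pos h2]
          ring
        · rw [if_neg (by omega), if_neg (by omega), if_neg h2]
          ring
    · rw [hsfB, hXNpow, sf_add_right, sf_smul_right, hy'xval, hy'xval, hGB,
        Matrix.fromBlocks_apply₂₁, Matrix.neg_apply, Matrix.transpose_apply, hJm]
      have hi := i.isLt; have hj := j.isLt
      show _ = -(if j = i then lam else if (j : ℕ) = (i : ℕ) + 1 then 1 else 0)
      by_cases h1 : j = i
      · subst h1
        rw [if_neg (by omega), if_pos (by omega), if_pos rfl]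
        ring
      · have h1' : (j : ℕ) ≠ (i : ℕ) := fun hcon => h1 (Fin.ext hcon)
        rw [if_neg h1]
        by_cases h2 : (j : ℕ) = (i : ℕ) + 1
        · rw [if_pos (by omega), if_neg (by omega), if_pos h2]
          ring
        · rw [if_neg (by omega), if_neg (by omega), if_neg h2]
          ring
    · rw [hsfB, hXNpow, sf_add_right, sf_smul_right, hyyval, hyyval, hGB,
        Matrix.fromBlocks_apply₂₂, Matrix.zero_apply]
      ring
  -- the orthogonal complement
  have hG₀G₀ : G₀ * G₀ = -1 := G0_mul_G0
  set ψ : (Fin n → F) →ₗ[F] (Fin m ⊕ Fin m → F) :=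
    Matrix.mulVecLin (Matrix.of fun s => A *ᵥ E s) with hψ
  have hψapp : ∀ (w : Fin n → F) (s), ψ w s = sf A w (E s) := by
    intro w s
    show (A *ᵥ E s) ⬝ᵥ w = w ⬝ᵥ A *ᵥ E s
    exact dotProduct_comm _ _
  have hcomb : ∀ (a : Fin m ⊕ Fin m → F) (t),
      sf A (∑ s, a s • E s) (E t) = (a ᵥ* G₀) t := by
    intro a t
    rw [sf_sum_left]
    simp only [Matrix.vecMul, dotProduct]
    exact Finset.sum_congr rfl fun s _ => by rw [sf_smul_left, hGA]
  have hψsurj : Function.Surjective ψ := by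
    intro t
    refine ⟨∑ s, (t ᵥ* (-G₀)) s • E s, ?_⟩
    funext s'
    rw [hψapp, hcomb, Matrix.vecMul_vecMul, Matrix.neg_mul, hG₀G₀, neg_neg, Matrix.vecMul_one]
  set W := LinearMap.ker ψ with hW
  set d := Module.finrank F ↥W with hd
  have hdim : (m + m) + d = n := by
    have h1 := LinearMap.finrank_range_add_finrank_ker ψ
    rw [LinearMap.range_eq_top.mpr hψsurj, finrank_top] at h1
    rw [Module.finrank_fintype_fun_eq_card, Module.finrank_fintype_fun_eq_card,
      Fintype.card_sum, Fintype.card_fin, Fintype.card_fin] at h1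
    rw [hd, hW]
    omega
  set bW := Module.finBasis F ↥W with hbW
  set zv : Fin d → (Fin n → F) := fun i => ((bW i : ↥W) : Fin n → F) with hzv
  have hzvW : ∀ i, zv i ∈ W := fun i => (bW i).2
  have hWsf : ∀ w ∈ W, ∀ s, sf A w (E s) = 0 := by
    intro w hw s
    rw [← hψapp]
    rw [hW, LinearMap.mem_ker] at hw
    rw [hw]
    rfl
  have hsfW : ∀ w ∈ W, ∀ s, sf A (E s) w = 0 := by
    intro w hw s
    rw [sf_skew hA, hWsf w hw s, neg_zero]
  -- linear independence of E and spanning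
  have hvGzero : ∀ a : Fin m ⊕ Fin m → F, a ᵥ* G₀ = 0 → a = 0 := by
    intro a ha
    have h2 : (a ᵥ* G₀) ᵥ* G₀ = a ᵥ* (G₀ * G₀) := Matrix.vecMul_vecMul a G₀ G₀
    rw [ha, Matrix.zero_vecMul, hG₀G₀] at h2
    have h3 : a ᵥ* (-1 : Matrix (Fin m ⊕ Fin m) (Fin m ⊕ Fin m) F) = -a := by
      rw [Matrix.vecMul_neg, Matrix.vecMul_one]
    rw [h3] at h2
    have := congrArg Neg.neg h2
    rw [neg_zero, neg_neg] at this
    exact this.symm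
  have hEli : LinearIndependent F E := by
    rw [Fintype.linearIndependent_iff]
    intro a ha
    have h1 : a ᵥ* G₀ = 0 := by
      funext t
      rw [← hcomb a t, ha, sf_zero_left]
      simp
    have := hvGzero a h1
    intro i
    rw [this]
    rfl
  have hspan : Submodule.span F (Set.range E) ⊔ W = ⊤ := by
    apply Submodule.eq_top_of_finrank_eq
    have hdisjEW : Submodule.span F (Set.range E) ⊓ W = ⊥ := by
      rw [Submodule.eq_bot_iff]
      rintro w ⟨hw1, hw2⟩
      obtain ⟨a, rfl⟩ := (Submodule.mem_span_range_iff_exists_fun F).mp hw1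
      have h1 : a ᵥ* G₀ = 0 := by
        funext t
        rw [← hcomb a t, hWsf _ hw2 t]
        simp
      rw [hvGzero a h1]
      simp
    have h3 := Submodule.finrank_sup_add_finrank_inf_eq (Submodule.span F (Set.range E)) W
    rw [hdisjEW, finrank_bot, add_zero, finrank_span_eq_card hEli] at h3
    rw [Module.finrank_fintype_fun_eq_card, Fintype.card_fin]
    rw [Fintype.card_sum, Fintype.card_fin] at h3
    omega
  -- invariance of W-orthogonality under B
  have hNEim : ∀ s, N *ᵥ E s = 0 ∨ ∃ t, N *ᵥ E s = E t := by
    rintro (i | j)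
    · show N *ᵥ (N ^ (m - 1 - (i : ℕ)) *ᵥ x) = 0 ∨ _
      by_cases h : (i : ℕ) = 0
      · left
        rw [mulVec_mulVec, ← pow_succ', show m - 1 - (i : ℕ) + 1 = m from by
          have := i.isLt; omega, hNmx]
      · right
        refine ⟨Sum.inl ⟨(i : ℕ) - 1, by have := i.isLt; omega⟩, ?_⟩
        show N *ᵥ (N ^ (m - 1 - (i : ℕ)) *ᵥ x) = N ^ (m - 1 - ((i : ℕ) - 1)) *ᵥ x
        rw [mulVec_mulVec, ← pow_succ', show m - 1 - (i : ℕ) + 1 = m - 1 - ((i : ℕ) - 1) from by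
          have := i.isLt; omega]
    · show N *ᵥ (N ^ (j : ℕ) *ᵥ y') = 0 ∨ _
      by_cases h : (j : ℕ) = m - 1
      · left
        rw [mulVec_mulVec, ← pow_succ']
        exact hy'kill _ (by have := j.isLt; omega)
      · right
        refine ⟨Sum.inr ⟨(j : ℕ) + 1, by have := j.isLt; omega⟩, ?_⟩
        show N *ᵥ (N ^ (j : ℕ) *ᵥ y') = N ^ ((j : ℕ) + 1) *ᵥ y'
        rw [mulVec_mulVec, ← pow_succ']
  have hWsfB : ∀ w ∈ W, ∀ s, sf B w (E s) = 0 := by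
    intro w hw s
    rw [hsfB, hXw, sf_add_right, sf_smul_right, hWsf w hw s, mul_zero, add_zero]
    rcases hNEim s with h | ⟨t, ht⟩
    · rw [h, sf_zero_right]
    · rw [ht, hWsf w hw t]
  have hsfBW : ∀ w ∈ W, ∀ s, sf B (E s) w = 0 := by
    intro w hw s
    rw [sf_skew hB, hWsfB w hw s, neg_zero]
  -- the restricted pair
  set A' : Matrix (Fin d) (Fin d) F := Matrix.of fun i j => sf A (zv i) (zv j) with hA'
  set B' : Matrix (Fin d) (Fin d) F := Matrix.of fun i j => sf B (zv i) (zv j) with hB'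
  have hA'skew : A'ᵀ = -A' := by
    ext i j
    show sf A (zv j) (zv i) = -(sf A (zv i) (zv j))
    rw [sf_skew hA]
  have hB'skew : B'ᵀ = -B' := by
    ext i j
    show sf B (zv j) (zv i) = -(sf B (zv i) (zv j))
    rw [sf_skew hB]
  have hzvli : LinearIndependent F zv :=
    (bW.linearIndependent).map' W.subtype (Submodule.ker_subtype W)
  have hWmemsf : ∀ w ∈ W, ∀ vv : Fin n → F, (∀ i, sf A (zv i) vv = 0) → sf A w vv = 0 := by
    intro w hw vv hvv
    have hrepr := bW.sum_repr ⟨w, hw⟩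
    have hco : w = ∑ j, (bW.repr ⟨w, hw⟩ j) • zv j := by
      have := congrArg (W.subtype) hrepr
      rw [map_sum] at this
      simp only [Submodule.coe_subtype, SetLike.val_smul, _root_.map_smul] at this
      exact this.symm
    rw [hco, sf_sum_left]
    refine Finset.sum_eq_zero fun j _ => ?_
    rw [sf_smul_left, hvv j, mul_zero]
  have hA'inj : ∀ a : Fin d → F, A' *ᵥ a = 0 → a = 0 := by
    intro a ha
    set vv := ∑ j, a j • zv j with hvv
    have hvvW : vv ∈ W := Submodule.sum_mem _ fun j _ => Submodule.smul_mem _ _ (hzvW j)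
    have hv1 : ∀ i, sf A (zv i) vv = 0 := by
      intro i
      have h1 : sf A (zv i) vv = (A' *ᵥ a) i := by
        rw [hvv, sf_sum_right]
        simp only [Matrix.mulVec, dotProduct]
        exact Finset.sum_congr rfl fun j _ => by
          rw [sf_smul_right]
          show a j * sf A (zv i) (zv j) = A' i j * a j
          rw [hA']
          ring_nf
          rfl
      rw [h1, ha]
      rfl
    have hAvv : A *ᵥ vv = 0 := by
      funext i
      rw [show (0 : Fin n → F) i = 0 from rfl, ← sf_single_left]
      have hmem : (Pi.single i 1 : Fin n → F) ∈ Submodule.span F (Set.range E) ⊔ W :=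
        hspan ▸ Submodule.mem_top
      obtain ⟨p, hp, w, hw, hsum⟩ := Submodule.mem_sup.mp hmem
      rw [← hsum, sf_add_left]
      have hpE : sf A p vv = 0 := by
        obtain ⟨aco, rfl⟩ := (Submodule.mem_span_range_iff_exists_fun F).mp hp
        rw [sf_sum_left]
        refine Finset.sum_eq_zero fun s _ => ?_
        rw [sf_smul_left]
        have : sf A (E s) vv = 0 := by
          rw [sf_skew hA, hWsf vv hvvW s, neg_zero]
        rw [this, mul_zero]
      rw [hpE, hWmemsf w hw vv hv1, add_zero]
    have hvv0 : vv = 0 := hCancel vv hAvv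
    have := Fintype.linearIndependent_iff.mp hzvli a (by rw [← hvv]; exact hvv0)
    funext i
    rw [this i]
    rfl
  have hA'unit : IsUnit A' := by
    rw [← Matrix.mulVec_injective_iff_isUnit]
    intro a b hab
    have h1 : A' *ᵥ (a - b) = 0 := by
      have := _root_.map_sub (Matrix.mulVecLin A') a b
      show Matrix.mulVecLin A' (a - b) = 0
      rw [this]
      show A' *ᵥ a - A' *ᵥ b = 0
      rw [hab, sub_self]
    have := hA'inj _ h1
    exact sub_eq_zero.mp (by rw [this]) |>.symm ▸ rfl
  -- apply the induction hypothesis to the complement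
  obtain ⟨ι', i1, sz', P', Q', hJ', ⟨e'⟩, v', gA'1, gA'2, gB'1, gB'2⟩ :=
    IH d (by omega) A' B' hA'skew hB'skew hA'unit
  haveI := i1
  -- lift vectors from the complement
  set lift : (Fin d → F) → (Fin n → F) := fun cvec => ∑ j, cvec j • zv j with hlift
  have hliftW : ∀ cvec, lift cvec ∈ W :=
    fun cvec => Submodule.sum_mem _ fun j _ => Submodule.smul_mem _ _ (hzvW j)
  have hliftA : ∀ c1 c2, sf A (lift c1) (lift c2) = sf A' c1 c2 := by
    intro c1 c2
    rw [hlift]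
    simp only []
    rw [sf_sum_left]
    show _ = c1 ⬝ᵥ A' *ᵥ c2
    simp only [dotProduct, Matrix.mulVec]
    refine Finset.sum_congr rfl fun i _ => ?_
    rw [sf_smul_left, sf_sum_right]
    have : ∀ j ∈ Finset.univ, sf A (zv i) (c2 j • zv j) = A' i j * c2 j := by
      intro j _
      rw [sf_smul_right]
      show c2 j * sf A (zv i) (zv j) = A' i j * c2 j
      rw [hA']
      ring_nf
      rfl
    rw [Finset.sum_congr rfl this]
  have hliftB : ∀ c1 c2, sf B (lift c1) (lift c2) = sf B' c1 c2 := by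
    intro c1 c2
    rw [hlift]
    simp only []
    rw [sf_sum_left]
    show _ = c1 ⬝ᵥ B' *ᵥ c2
    simp only [dotProduct, Matrix.mulVec]
    refine Finset.sum_congr rfl fun i _ => ?_
    rw [sf_smul_left, sf_sum_right]
    have : ∀ j ∈ Finset.univ, sf B (zv i) (c2 j • zv j) = B' i j * c2 j := by
      intro j _
      rw [sf_smul_right]
      show c2 j * sf B (zv i) (zv j) = B' i j * c2 j
      rw [hB']
      ring_nf
      rfl
    rw [Finset.sum_congr rfl this]
  -- assemble
  set szb : Unit ⊕ ι' → ℕ := Sum.elim (fun _ => m + m) sz' with hszb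
  set Pb : ∀ i : Unit ⊕ ι', Matrix (Fin (szb i)) (Fin (szb i)) F := fun i =>
    match i with
    | Sum.inl _ => Matrix.reindex finSumFinEquiv finSumFinEquiv G₀
    | Sum.inr j => P' j with hPb
  set Qb : ∀ i : Unit ⊕ ι', Matrix (Fin (szb i)) (Fin (szb i)) F := fun i =>
    match i with
    | Sum.inl _ => Matrix.reindex finSumFinEquiv finSumFinEquiv GB
    | Sum.inr j => Q' j with hQb
  refine ⟨Unit ⊕ ι', inferInstance, szb, Pb, Qb, ?_, ?_, ?_⟩
  · rintro (u | j)
    · exact ⟨m, lam, finSumFinEquiv, rfl, rfl⟩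
    · exact hJ' j
  · -- cardinality
    have hcard : Fintype.card (Σ i : Unit ⊕ ι', Fin (szb i)) = n := by
      have h2 := Fintype.card_congr e'
      rw [Fintype.card_sigma, Fintype.card_fin] at h2
      rw [Fintype.card_sigma, Fintype.sum_sum_type]
      simp only [Fintype.card_fin]
      have h3 : ∑ x : Unit, szb (Sum.inl x) = m + m := by simp [hszb]
      have h4 : ∑ j : ι', szb (Sum.inr j) = d := by simpa [hszb] using h2
      rw [h3, h4]
      exact hdim
    exact ⟨Fintype.equivFinOfCardEq hcard⟩
  · set vaux : ∀ i : Unit ⊕ ι', Fin (szb i) → (Fin n → F) := fun i =>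
      match i with
      | Sum.inl _ => fun a => E (finSumFinEquiv.symm a)
      | Sum.inr j => fun a => lift (v' ⟨j, a⟩) with hvaux
    refine ⟨fun s => vaux s.1 s.2, ?_, ?_, ?_, ?_⟩
    · rintro (u | j) a b
      · show sf A (E (finSumFinEquiv.symm a)) (E (finSumFinEquiv.symm b))
          = Matrix.reindex finSumFinEquiv finSumFinEquiv G₀ a b
        exact hGA _ _
      · show sf A (lift (v' ⟨j, a⟩)) (lift (v' ⟨j, b⟩)) = P' j a b
        rw [hliftA]; exact gA'1 j a b
    · rintro (u | j) (u' | j') a b hij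
      · cases u; cases u'; exact absurd rfl hij
      · show sf A (E (finSumFinEquiv.symm a)) (lift (v' ⟨j', b⟩)) = 0
        exact hsfW _ (hliftW _) _
      · show sf A (lift (v' ⟨j, a⟩)) (E (finSumFinEquiv.symm b)) = 0
        exact hWsf _ (hliftW _) _
      · show sf A (lift (v' ⟨j, a⟩)) (lift (v' ⟨j', b⟩)) = 0
        rw [hliftA]
        exact gA'2 j j' a b (fun hcon => hij (by rw [hcon]))
    · rintro (u | j) a b
      · show sf B (E (finSumFinEquiv.symm a)) (E (finSumFinEquiv.symm b))
          = Matrix.reindex finSumFinEquiv finSumFinEquiv GB a b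
        exact hGBE _ _
      · show sf B (lift (v' ⟨j, a⟩)) (lift (v' ⟨j, b⟩)) = Q' j a b
        rw [hliftB]; exact gB'1 j a b
    · rintro (u | j) (u' | j') a b hij
      · cases u; cases u'; exact absurd rfl hij
      · show sf B (E (finSumFinEquiv.symm a)) (lift (v' ⟨j', b⟩)) = 0
        exact hsfBW _ (hliftW _) _
      · show sf B (lift (v' ⟨j, a⟩)) (E (finSumFinEquiv.symm b)) = 0
        exact hWsfB _ (hliftW _) _
      · show sf B (lift (v' ⟨j, a⟩)) (lift (v' ⟨j', b⟩)) = 0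
        rw [hliftB]
        exact gB'2 j j' a b (fun hcon => hij (by rw [hcon]))

end JPairProof

namespace JPairProof
variable {F : Type*} [Field F]

end JPairProof

open JPairProof in
theorem nonsingular_skew_pair_congruent_sum_of_J_pairs
    {F : Type*} [Field F] [IsAlgClosed F] (hchar : (2 : F) ≠ 0) {n : ℕ}
    (A B : Matrix (Fin n) (Fin n) F) (hA : Aᵀ = -A) (hB : Bᵀ = -B)
    (hinv : IsUnit A) :
    ∃ (k : ℕ) (sz : Fin k → ℕ)
      (P Q : ∀ i : Fin k, Matrix (Fin (sz i)) (Fin (sz i)) F),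
      (∀ i, IsJPair (P i) (Q i)) ∧
      ∃ (S : Matrix (Fin n) (Fin n) F) (e : (Σ i : Fin k, Fin (sz i)) ≃ Fin n),
        IsUnit S ∧
        S * A * Sᵀ = Matrix.reindex e e (Matrix.blockDiagonal' P) ∧
        S * B * Sᵀ = Matrix.reindex e e (Matrix.blockDiagonal' Q) := by
  classical
  obtain ⟨ι, hFin, sz, P, Q, hJ, ⟨eιn⟩, v, gAd, gAo, gBd, gBo⟩ :=
    VG hchar n A B hA hB hinv
  set k := Fintype.card ι with hk
  set eb := Fintype.equivFin ι with heb
  refine ⟨k, fun i => sz (eb.symm i), fun i => P (eb.symm i), fun i => Q (eb.symm i),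
    fun i => hJ (eb.symm i), ?_⟩
  set φ : (Σ i : Fin k, Fin (sz (eb.symm i))) ≃ (Σ i : ι, Fin (sz i)) :=
    Equiv.sigmaCongrLeft (β := fun i : ι => Fin (sz i)) eb.symm with hφ
  set e : (Σ i : Fin k, Fin (sz (eb.symm i))) ≃ Fin n := φ.trans eιn with he
  set S : Matrix (Fin n) (Fin n) F := Matrix.of fun l => v (φ (e.symm l)) with hS
  have hφapp : ∀ (i : Fin k) (a : Fin (sz (eb.symm i))), φ ⟨i, a⟩ = ⟨eb.symm i, a⟩ :=
    fun i a => rfl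
  -- Gram identities
  have hgram : ∀ s t : Σ i : Fin k, Fin (sz (eb.symm i)),
      sf A (v (φ s)) (v (φ t)) = blockDiagonal' (fun i => P (eb.symm i)) s t ∧
      sf B (v (φ s)) (v (φ t)) = blockDiagonal' (fun i => Q (eb.symm i)) s t := by
    rintro ⟨i, a⟩ ⟨j, b⟩
    rw [hφapp, hφapp]
    rcases eq_or_ne i j with rfl | hij
    · rw [blockDiagonal'_apply_eq, blockDiagonal'_apply_eq]
      exact ⟨gAd _ a b, gBd _ a b⟩
    · have hij' : eb.symm i ≠ eb.symm j := fun hcon => hij (eb.symm.injective hcon)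
      rw [blockDiagonal'_apply_ne _ _ _ hij, blockDiagonal'_apply_ne _ _ _ hij]
      exact ⟨gAo _ _ a b hij', gBo _ _ a b hij'⟩
  have hSA : S * A * Sᵀ = Matrix.reindex e e (blockDiagonal' fun i => P (eb.symm i)) := by
    ext l r
    rw [mul_mul_transpose_entry]
    show sf A (v (φ (e.symm l))) (v (φ (e.symm r))) = _
    rw [(hgram _ _).1, Matrix.reindex_apply, Matrix.submatrix_apply]
  have hSB : S * B * Sᵀ = Matrix.reindex e e (blockDiagonal' fun i => Q (eb.symm i)) := by
    ext l r
    rw [mul_mul_transpose_entry]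
    show sf B (v (φ (e.symm l))) (v (φ (e.symm r))) = _
    rw [(hgram _ _).2, Matrix.reindex_apply, Matrix.submatrix_apply]
  -- Invertibility of S
  have hPP : ∀ i : Fin k, P (eb.symm i) * P (eb.symm i) = -1 := by
    intro i
    obtain ⟨m, lam, em, hPm, _⟩ := hJ (eb.symm i)
    rw [hPm, Matrix.reindex_apply, Matrix.submatrix_mul_equiv, G0_mul_G0]
    ext a b
    simp [Matrix.submatrix_apply, Matrix.one_apply, em.symm.injective.eq_iff]
  have hbd : (blockDiagonal' fun i : Fin k => P (eb.symm i)) *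
      (blockDiagonal' fun i : Fin k => -(P (eb.symm i))) = 1 := by
    rw [← Matrix.blockDiagonal'_mul]
    have : (fun i : Fin k => P (eb.symm i) * -(P (eb.symm i)))
        = fun i : Fin k => (1 : Matrix (Fin (sz (eb.symm i))) (Fin (sz (eb.symm i))) F) := by
      funext i
      rw [mul_neg, hPP, neg_neg]
    rw [this]
    exact Matrix.blockDiagonal'_one
  have hGunit : Matrix.reindex e e (blockDiagonal' fun i : Fin k => P (eb.symm i)) *
      Matrix.reindex e e (blockDiagonal' fun i : Fin k => -(P (eb.symm i))) = 1 := by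
    rw [Matrix.reindex_apply, Matrix.reindex_apply, Matrix.submatrix_mul_equiv, hbd]
    ext a b
    simp [Matrix.submatrix_apply, Matrix.one_apply, e.symm.injective.eq_iff]
  have hSunit : IsUnit S := by
    have h1 : S * (A * Sᵀ * Matrix.reindex e e (blockDiagonal' fun i : Fin k => -(P (eb.symm i)))) = 1 := by
      rw [← mul_assoc, ← mul_assoc, hSA]
      exact hGunit
    exact Matrix.isUnit_iff_isUnit_det S |>.mpr
      (Matrix.isUnit_det_of_right_inverse h1)
  exact ⟨S, e, hSunit, hSA, hSB⟩
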